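/- Let r be a natural number and let χ : ℤ^r → ℂˣ be a nontrivial group homomorphism, and let ℂ_χ denote the one-dimensional representation of ℤ^r on ℂ in which g acts as multiplication by χ(g). Then the group homology H_q(ℤ^r, ℂ_χ) vanishes for every q ≥ 0. -/

import Mathlib

open CategoryTheory

/-- The one-dimensional representation `ℂ_χ` of a group `G` attached to a character
`χ : G →* ℂˣ`, where `g` acts as multiplication by `χ g`. -/
noncomputable def charRep (G : Type) [CommGroup G] (χ : G →* ℂˣ) : Representation ℂ G ℂ where
  toFun g := (χ g : ℂ) • LinearMap.id
  map_one' := by ext x; simp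
  map_mul' g h := by ext x; simp [mul_smul]; ring

/-- Group homology of a commutative group `G` with coefficients in a representation
`ρ : Representation ℂ G ℂ`, defined as `Tor_q^{ℂ[G]}(ℂ_triv, ℂ_ρ)` (which is what the
standard bar resolution computes). -/
noncomputable def grpHomology (G : Type) [CommGroup G] (ρ : Representation ℂ G ℂ) (q : ℕ) :
    ModuleCat (MonoidAlgebra ℂ G) :=
  ((Tor (ModuleCat (MonoidAlgebra ℂ G)) q).obj
      (ModuleCat.of (MonoidAlgebra ℂ G)
        (Representation.trivial ℂ (G := G) (V := ℂ)).asModule)).obj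
    (ModuleCat.of (MonoidAlgebra ℂ G) ρ.asModule)

/-- If a natural endomorphism `μ` of the identity functor is killed by an additive functor `F`,
then it is killed by all the left derived functors of `F`. -/
lemma leftDerived_map_eq_zero' {C : Type*} {D : Type*} [Category C] [Category D]
    [Abelian C] [HasProjectiveResolutions C] [Abelian D]
    (F : C ⥤ D) [F.Additive] (μ : 𝟭 C ⟶ 𝟭 C)
    (hF : ∀ Y : C, F.map (μ.app Y) = 0) (n : ℕ) (X : C) :
    (F.leftDerived n).map (μ.app X) = 0 := by
  have hP : HasProjectiveResolution X := inferInstance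
  obtain ⟨P⟩ := hP.out
  let g : P.complex ⟶ P.complex :=
    { f := fun i => μ.app _
      comm' := fun i j _ => by simpa using (μ.naturality (P.complex.d i j)).symm }
  have w : g ≫ P.π = P.π ≫ (ChainComplex.single₀ C).map (μ.app X) := by
    apply HomologicalComplex.to_single_hom_ext
    simp [g, ChainComplex.single₀_map_f_zero]
    exact (μ.naturality (P.π.f 0)).symm
  have hg : (F.mapHomologicalComplex _).map g = 0 := by
    ext i
    simp [g]
    exact hF _
  rw [F.leftDerived_map_eq n (μ.app X) g w, Functor.comp_map, hg]
  simp
  exact Limits.zero_comp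

/-- Scalar multiplication by a central ring element, as a natural endomorphism of the
identity functor of `ModuleCat A`. -/
noncomputable def smulNat (A : Type*) [CommRing A] (s : A) :
    𝟭 (ModuleCat A) ⟶ 𝟭 (ModuleCat A) where
  app X := ModuleCat.ofHom
    { toFun := fun x => s • x
      map_add' := fun x y => smul_add s x y
      map_smul' := fun r x => smul_comm s r x }
  naturality X Y f := by
    ext x
    exact (f.hom.map_smul s x).symm

/-- The group homology `H_q(ℤ^r, ℂ_χ)` with coefficients in a nontrivial character `χ`
vanishes in every degree `q`. -/
theorem groupHomology_zpow_nontrivial_char_vanishes (r : ℕ)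
    (χ : Multiplicative (Fin r → ℤ) →* ℂˣ) (hχ : χ ≠ 1) (q : ℕ) :
    Subsingleton (grpHomology (Multiplicative (Fin r → ℤ))
      (charRep (Multiplicative (Fin r → ℤ)) χ) q) := by
  set G := Multiplicative (Fin r → ℤ)
  -- find an element where χ is nontrivial
  obtain ⟨g₀, hg₀⟩ : ∃ g : G, (χ g : ℂ) ≠ 1 := by
    by_contra h
    push_neg at h
    exact hχ (MonoidHom.ext fun g => Units.ext (by simpa using h g))
  have h1 : (1 : ℂ) - (χ g₀ : ℂ) ≠ 0 := sub_ne_zero.mpr (Ne.symm hg₀)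
  set A := MonoidAlgebra ℂ G
  set s : A := (MonoidAlgebra.single (1:G) ((1 - (χ g₀ : ℂ))⁻¹)) *
        (MonoidAlgebra.single (1:G) (1:ℂ) - MonoidAlgebra.single g₀ (1:ℂ)) with hs
  -- s acts as 0 on the trivial module
  have hM : ∀ x : (Representation.trivial ℂ (G := G) (V := ℂ)).asModule, s • x = 0 := by
    intro x
    apply (Representation.trivial ℂ (G := G) (V := ℂ)).asModuleEquiv.injective
    rw [Representation.asModuleEquiv_map_smul]
    simp [hs, map_mul, map_sub, Representation.asAlgebraHom_single]
  -- s acts as 1 on ℂ_χ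
  have hN : ∀ x : (charRep G χ).asModule, s • x = x := by
    intro x
    apply (charRep G χ).asModuleEquiv.injective
    rw [Representation.asModuleEquiv_map_smul]
    simp [hs, map_mul, map_sub, Representation.asAlgebraHom_single, charRep, sub_smul, smul_smul]
    field_simp
  set M := ModuleCat.of A (Representation.trivial ℂ (G := G) (V := ℂ)).asModule
  set N := ModuleCat.of A (charRep G χ).asModule
  set F := (MonoidalCategory.tensoringLeft (ModuleCat A)).obj M with hF
  have hFkill : ∀ Y : ModuleCat A, F.map ((smulNat A s).app Y) = 0 := by
    intro Y
    apply ModuleCat.hom_ext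
    apply TensorProduct.ext'
    intro x y
    show x ⊗ₜ[A] (s • y) = 0
    rw [← TensorProduct.smul_tmul, hM x, TensorProduct.zero_tmul]
  have key : (F.leftDerived q).map ((smulNat A s).app N) = 0 :=
    leftDerived_map_eq_zero' F (smulNat A s) hFkill q N
  have hNid : (smulNat A s).app N = 𝟙 N := by
    ext x
    show s • x = x
    exact hN x
  rw [hNid] at key
  -- identity of the Tor object is zero
  have hid : 𝟙 (grpHomology G (charRep G χ) q) = 0 := by
    have : (F.leftDerived q).map (𝟙 N) = 𝟙 ((F.leftDerived q).obj N) :=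
      CategoryTheory.Functor.map_id _ _
    rw [this] at key
    exact key
  constructor
  intro a b
  calc a = (𝟙 (grpHomology G (charRep G χ) q)) a := rfl
    _ = (0 : grpHomology G (charRep G χ) q ⟶ grpHomology G (charRep G χ) q) a := by rw [hid]
    _ = (𝟙 (grpHomology G (charRep G χ) q)) b := by rw [hid]; rfl
    _ = b := rfl
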